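/- Let C* = (C*(1), …, C*(m)) be an optimal solution of the integer program (IP), and let τ* be the optimal value of the linear program (LP) with the same data N_1, …, N_m (viewed as reals) and the same budget Q. Then for every i ∈ {1, …, m}, C*(i) ≤ max(⌈τ*⌉ − N_i, 0). -/

import Mathlib

open Finset

/-- Let `Cstar` be an optimal solution of the integer program (IP):
maximize `∑ i, ∑ n ∈ Icc 1 (C i), 1/√(N i + n)` subject to `∑ i, C i ≤ Q`, and let
`τstar` be the optimal value of the linear program (LP) with the same data (viewed as reals).
Then for every `i`, `Cstar i ≤ max (⌈τstar⌉ - N i) 0`. -/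
theorem ip_optimal_le_ceil_lp_value
    (m : ℕ) (hm : 1 ≤ m) (N : Fin m → ℕ) (Q : ℕ)
    (Cstar : Fin m → ℕ)
    (hCfeas : ∑ i, Cstar i ≤ Q)
    (hCopt : ∀ C : Fin m → ℕ, (∑ i, C i ≤ Q) →
      ∑ i, ∑ n ∈ Finset.Icc 1 (C i), (1 : ℝ) / Real.sqrt ((N i : ℝ) + (n : ℝ)) ≤
        ∑ i, ∑ n ∈ Finset.Icc 1 (Cstar i), (1 : ℝ) / Real.sqrt ((N i : ℝ) + (n : ℝ)))
    (τstar : ℝ)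
    (hopt : IsGreatest {τ : ℝ | ∃ nn : Fin m → ℝ, 0 ≤ τ ∧ (∀ i, 0 ≤ nn i) ∧
      (∀ i, τ ≤ (N i : ℝ) + nn i) ∧ ∑ i, nn i ≤ (Q : ℝ)} τstar) :
    ∀ i, (Cstar i : ℝ) ≤ max ((⌈τstar⌉ : ℝ) - (N i : ℝ)) 0 := by
  intro i
  by_contra hcon
  push_neg at hcon
  rw [max_lt_iff] at hcon
  obtain ⟨hc1, hc2⟩ := hcon
  -- basic facts
  obtain ⟨nn0, hτ0, -, -, -⟩ := hopt.1
  have hCi1 : 1 ≤ Cstar i := by exact_mod_cast hc2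
  set k : ℤ := ⌈τstar⌉ with hkdef
  have hτk : τstar ≤ (k : ℝ) := Int.le_ceil τstar
  have hkey : (k : ℝ) + 1 ≤ (N i : ℝ) + (Cstar i : ℝ) := by
    have h1 : (k : ℝ) < (N i : ℝ) + (Cstar i : ℝ) := by linarith
    have h2 : k < (N i : ℤ) + (Cstar i : ℤ) := by exact_mod_cast h1
    have h3 : k + 1 ≤ (N i : ℤ) + (Cstar i : ℤ) := h2
    exact_mod_cast h3
  have hmpos : (0 : ℝ) < (m : ℝ) := by exact_mod_cast hm
  by_cases hA : ∃ j, N j + Cstar j + 1 < N i + Cstar i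
  · -- Case A: move one unit from i to j, contradicting IP optimality
    obtain ⟨j, hj⟩ := hA
    have hji : j ≠ i := by
      intro h; subst h; omega
    obtain ⟨d, hd⟩ : ∃ d, Cstar i = d + 1 := ⟨Cstar i - 1, by omega⟩
    set G : Fin m → ℕ → ℝ :=
      fun x c => ∑ n ∈ Finset.Icc 1 c, (1 : ℝ) / Real.sqrt ((N x : ℝ) + (n : ℝ)) with hG
    set C : Fin m → ℕ :=
      Function.update (Function.update Cstar j (Cstar j + 1)) i d with hCdef
    have hCi : C i = d := by simp [hCdef]
    have hCj : C j = Cstar j + 1 := by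
      simp [hCdef, Function.update_of_ne hji]
    have hCrest : ∀ x ∈ (univ.erase i).erase j, C x = Cstar x := by
      intro x hx
      rw [mem_erase, mem_erase] at hx
      simp [hCdef, Function.update_of_ne hx.2.1, Function.update_of_ne hx.1]
    have hjmem : j ∈ univ.erase i := mem_erase.2 ⟨hji, mem_univ j⟩
    have split : ∀ D : Fin m → ℕ,
        ∑ x, G x (D x) = G i (D i) + (G j (D j) + ∑ x ∈ (univ.erase i).erase j, G x (D x)) := by
      intro D
      rw [← Finset.add_sum_erase _ _ (mem_univ i), ← Finset.add_sum_erase _ _ hjmem]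
    have splitN : ∀ D : Fin m → ℕ,
        ∑ x, D x = D i + (D j + ∑ x ∈ (univ.erase i).erase j, D x) := by
      intro D
      rw [← Finset.add_sum_erase _ _ (mem_univ i), ← Finset.add_sum_erase _ _ hjmem]
    -- feasibility of C
    have hSn : ∑ x ∈ (univ.erase i).erase j, C x
        = ∑ x ∈ (univ.erase i).erase j, Cstar x :=
      Finset.sum_congr rfl (fun x hx => hCrest x hx)
    have hsum : ∑ x, C x = ∑ x, Cstar x := by
      rw [splitN C, splitN Cstar, hCi, hCj, hSn]
      omega
    have hfeas : ∑ x, C x ≤ Q := by rw [hsum]; exact hCfeas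
    -- strict improvement
    have e1 : G i (Cstar i) = G i d + (1 : ℝ) / Real.sqrt ((N i : ℝ) + ((d + 1 : ℕ) : ℝ)) := by
      rw [hd, hG]
      exact Finset.sum_Icc_succ_top (by omega) _
    have e2 : G j (Cstar j + 1) =
        G j (Cstar j) + (1 : ℝ) / Real.sqrt ((N j : ℝ) + ((Cstar j + 1 : ℕ) : ℝ)) := by
      rw [hG]
      exact Finset.sum_Icc_succ_top (by omega) _
    have hterm : (1 : ℝ) / Real.sqrt ((N i : ℝ) + ((d + 1 : ℕ) : ℝ)) <
        (1 : ℝ) / Real.sqrt ((N j : ℝ) + ((Cstar j + 1 : ℕ) : ℝ)) := by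
      have hpos : (0 : ℝ) < (N j : ℝ) + ((Cstar j + 1 : ℕ) : ℝ) := by
        push_cast; positivity
      have hlt : (N j : ℝ) + ((Cstar j + 1 : ℕ) : ℝ) < (N i : ℝ) + ((d + 1 : ℕ) : ℝ) := by
        have : N j + (Cstar j + 1) < N i + (d + 1) := by omega
        exact_mod_cast this
      have hs : Real.sqrt ((N j : ℝ) + ((Cstar j + 1 : ℕ) : ℝ)) <
          Real.sqrt ((N i : ℝ) + ((d + 1 : ℕ) : ℝ)) :=
        Real.sqrt_lt_sqrt (le_of_lt hpos) hlt
      have hs0 : (0 : ℝ) < Real.sqrt ((N j : ℝ) + ((Cstar j + 1 : ℕ) : ℝ)) :=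
        Real.sqrt_pos.2 hpos
      exact one_div_lt_one_div_of_lt hs0 hs
    have hSg : ∑ x ∈ (univ.erase i).erase j, G x (C x)
        = ∑ x ∈ (univ.erase i).erase j, G x (Cstar x) :=
      Finset.sum_congr rfl (fun x hx => by rw [hCrest x hx])
    have hgt : ∑ x, G x (Cstar x) < ∑ x, G x (C x) := by
      rw [split C, split Cstar, hCi, hCj, hSg, e1, e2]
      linarith
    exact absurd (hCopt C hfeas) (not_le.2 hgt)
  · -- Case B: all levels ≥ k, and i has a spare unit: build a better LP solution
    push_neg at hA
    have hk_le : ∀ x, (k : ℝ) ≤ (N x : ℝ) + (Cstar x : ℝ) := by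
      intro x
      have h1 : N i + Cstar i ≤ N x + Cstar x + 1 := hA x
      have h2 : ((N i : ℝ) + (Cstar i : ℝ)) ≤ (N x : ℝ) + (Cstar x : ℝ) + 1 := by
        exact_mod_cast h1
      linarith
    set nn : Fin m → ℝ :=
      fun x => (if x = i then (Cstar x : ℝ) - 1 else (Cstar x : ℝ)) + 1 / m with hnn
    have hmem : (k : ℝ) + 1 / m ∈ {τ : ℝ | ∃ nn : Fin m → ℝ, 0 ≤ τ ∧ (∀ i, 0 ≤ nn i) ∧
        (∀ i, τ ≤ (N i : ℝ) + nn i) ∧ ∑ i, nn i ≤ (Q : ℝ)} := by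
      refine ⟨nn, ?_, ?_, ?_, ?_⟩
      · have : (0 : ℝ) ≤ (k : ℝ) := by
          have : (0 : ℤ) ≤ k := Int.ceil_nonneg hτ0
          exact_mod_cast this
        positivity
      · intro x
        rw [hnn]
        dsimp only
        split_ifs with h
        · subst h
          have : (1 : ℝ) ≤ (Cstar x : ℝ) := by exact_mod_cast hCi1
          have h1m : (0 : ℝ) < 1 / m := by positivity
          linarith
        · positivity
      · intro x
        rw [hnn]
        dsimp only
        split_ifs with h
        · subst h
          have := hkey
          linarith
        · have := hk_le x
          linarith
      · rw [hnn]
        have hsplit : ∑ x, ((if x = i then (Cstar x : ℝ) - 1 else (Cstar x : ℝ)) + 1 / m)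
            = (∑ x, (if x = i then (Cstar x : ℝ) - 1 else (Cstar x : ℝ)))
              + (m : ℝ) * (1 / m) := by
          rw [Finset.sum_add_distrib, Finset.sum_const, card_univ, Fintype.card_fin,
            nsmul_eq_mul]
        have hite : ∑ x, (if x = i then (Cstar x : ℝ) - 1 else (Cstar x : ℝ))
            = (∑ x, (Cstar x : ℝ)) - 1 := by
          have : ∀ x, (if x = i then (Cstar x : ℝ) - 1 else (Cstar x : ℝ))
              = (Cstar x : ℝ) + (if x = i then (-1 : ℝ) else 0) := by
            intro x; split_ifs <;> ring
          rw [Finset.sum_congr rfl (fun x _ => this x), Finset.sum_add_distrib,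
            Finset.sum_ite_eq' univ i (fun _ => (-1 : ℝ))]
          simp
          ring
        have hone : (m : ℝ) * (1 / m) = 1 := by field_simp
        have hQ : ∑ x, (Cstar x : ℝ) ≤ (Q : ℝ) := by
          rw [← Nat.cast_sum]
          exact_mod_cast hCfeas
        rw [hsplit, hite, hone]
        linarith
    have hle := hopt.2 hmem
    have h1m : (0 : ℝ) < 1 / m := by positivity
    linarith
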